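/- There are positive constants c₁, c₂ such that for any m, n ∈ ℕ with 2 ≤ n ≤ m ≤ 2ⁿ the following estimates hold: 2^{c₁·n} ≤ C(m,k) ≤ 2^{c₂·n}, where k is the smallest positive integer such that k ≥ n/(2·log₂(2m/n)) and C(m,k) is the binomial coefficient. -/

import Mathlib

set_option maxHeartbeats 4000000

open Real

private lemma aux_pow_le_choose_mul : ∀ (k m : ℕ), k ≤ m → m ^ k ≤ m.choose k * k ^ k := by
  intro k
  induction k with
  | zero => intro m _; simp
  | succ k ih =>
    intro m hm
    obtain ⟨m, rfl⟩ : ∃ m', m = m' + 1 := ⟨m - 1, by omega⟩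
    rcases Nat.eq_zero_or_pos k with rfl | hk0
    · simp
    have hkm : k ≤ m := by omega
    have ihm := ih m hkm
    have key : (m + 1) * k ≤ m * (k + 1) := by nlinarith
    have key2 : ((m + 1) * k) ^ k ≤ (m * (k + 1)) ^ k := Nat.pow_le_pow_left key k
    have succ_eq : (m + 1) * m.choose k = (m + 1).choose (k + 1) * (k + 1) := by
      simpa using Nat.add_one_mul_choose_eq m k
    have hpos : 0 < k ^ k := pow_pos hk0 k
    apply Nat.le_of_mul_le_mul_right _ hpos
    calc (m + 1) ^ (k + 1) * k ^ k
        = (m + 1) * (((m + 1) * k) ^ k) := by rw [mul_pow]; ring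
      _ ≤ (m + 1) * ((m * (k + 1)) ^ k) := Nat.mul_le_mul_left _ key2
      _ = (m + 1) * (m ^ k * (k + 1) ^ k) := by rw [mul_pow]
      _ ≤ (m + 1) * ((m.choose k * k ^ k) * (k + 1) ^ k) :=
            Nat.mul_le_mul_left _ (Nat.mul_le_mul_right _ ihm)
      _ = ((m + 1) * m.choose k) * (k ^ k * (k + 1) ^ k) := by ring
      _ = ((m + 1).choose (k + 1) * (k + 1)) * (k ^ k * (k + 1) ^ k) := by rw [succ_eq]
      _ = (m + 1).choose (k + 1) * (k + 1) ^ (k + 1) * k ^ k := by ring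

private lemma aux_div_pow_le_choose (k m : ℕ) (h : k ≤ m) :
    ((m : ℝ) / k) ^ k ≤ (m.choose k : ℝ) := by
  rcases Nat.eq_zero_or_pos k with rfl | hk0
  · simp
  have hk0' : (0:ℝ) < (k:ℝ) := by exact_mod_cast hk0
  rw [div_pow, div_le_iff₀ (by positivity)]
  exact_mod_cast aux_pow_le_choose_mul k m h

/-- Lemma 3.1(ii): there are positive constants `c₁, c₂` such that for all `m, n` with
`2 ≤ n ≤ m ≤ 2^n`, if `k` is the smallest positive integer with
`k ≥ n / (2 log₂(2m/n))`, then `2^(c₁ n) ≤ C(m,k) ≤ 2^(c₂ n)`. -/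
theorem choose_two_pow_bounds :
    ∃ c₁ c₂ : ℝ, 0 < c₁ ∧ 0 < c₂ ∧
      ∀ m n k : ℕ, 2 ≤ n → n ≤ m → m ≤ 2 ^ n →
        (1 ≤ k ∧ (n : ℝ) / (2 * Real.logb 2 (2 * m / n)) ≤ (k : ℝ) ∧
          (∀ j : ℕ, 1 ≤ j → (n : ℝ) / (2 * Real.logb 2 (2 * m / n)) ≤ (j : ℝ) → k ≤ j)) →
        (2 : ℝ) ^ (c₁ * (n : ℝ)) ≤ (m.choose k : ℝ) ∧
          (m.choose k : ℝ) ≤ (2 : ℝ) ^ (c₂ * (n : ℝ)) := by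
  refine ⟨1/16, 6, by norm_num, by norm_num, ?_⟩
  rintro m n k hn2 hnm hm2n ⟨hk1, hkge, hkmin⟩
  have hN2 : (2:ℝ) ≤ (n:ℝ) := by exact_mod_cast hn2
  have hN0 : (0:ℝ) < (n:ℝ) := by linarith
  have hMN : (n:ℝ) ≤ (m:ℝ) := by exact_mod_cast hnm
  have hM0 : (0:ℝ) < (m:ℝ) := lt_of_lt_of_le hN0 hMN
  have hK1 : (1:ℝ) ≤ (k:ℝ) := by exact_mod_cast hk1
  have hK0 : (0:ℝ) < (k:ℝ) := by linarith
  set L := Real.logb 2 (2 * (m:ℝ) / (n:ℝ)) with hL_def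
  clear_value L
  have hq_pos : (0:ℝ) < 2 * (m:ℝ) / (n:ℝ) := by positivity
  have hq2 : (2:ℝ) ≤ 2 * (m:ℝ) / (n:ℝ) := by rw [le_div_iff₀ hN0]; linarith
  have hlog22 : Real.logb 2 2 = 1 := by simp
  have hL1 : 1 ≤ L := by
    rw [hL_def]
    have h := Real.logb_le_logb_of_le (b := 2) one_lt_two (by norm_num : (0:ℝ) < 2) hq2
    rw [hlog22] at h; exact h
  have hLpos : (0:ℝ) < L := lt_of_lt_of_le one_pos hL1
  have hqm : 2 * (m:ℝ) / (n:ℝ) ≤ (m:ℝ) := by rw [div_le_iff₀ hN0]; nlinarith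
  have hL_le_N : L ≤ (n:ℝ) := by
    rw [hL_def]
    have hm' : (m:ℝ) ≤ (2:ℝ) ^ (n:ℕ) := by exact_mod_cast hm2n
    have h1 : 2 * (m:ℝ) / (n:ℝ) ≤ (2:ℝ) ^ ((n:ℕ):ℝ) := by
      rw [Real.rpow_natCast]; linarith
    calc Real.logb 2 (2 * (m:ℝ) / (n:ℝ)) ≤ Real.logb 2 ((2:ℝ) ^ ((n:ℕ):ℝ)) :=
          Real.logb_le_logb_of_le one_lt_two hq_pos h1
      _ = (n:ℝ) := Real.logb_rpow (by norm_num) (by norm_num)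
  -- upper bound on k
  have hk_hi : (k:ℝ) ≤ (n:ℝ)/(2*L) + 1 := by
    set j : ℕ := max 1 ⌈(n:ℝ)/(2*L)⌉₊ with hj
    have hj1 : 1 ≤ j := le_max_left _ _
    have hcj : (⌈(n:ℝ)/(2*L)⌉₊ : ℝ) ≤ (j:ℝ) := by exact_mod_cast le_max_right 1 ⌈(n:ℝ)/(2*L)⌉₊
    have hjge : (n:ℝ)/(2*L) ≤ (j:ℝ) := le_trans (Nat.le_ceil _) hcj
    have hkj : k ≤ j := hkmin j hj1 hjge
    have hceil : (⌈(n:ℝ)/(2*L)⌉₊:ℝ) < (n:ℝ)/(2*L) + 1 := Nat.ceil_lt_add_one (by positivity)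
    have hjle : (j:ℝ) ≤ (n:ℝ)/(2*L) + 1 := by
      have h0 : (0:ℝ) ≤ (n:ℝ)/(2*L) := by positivity
      rw [hj]; push_cast
      exact max_le (by linarith) (by linarith)
    calc (k:ℝ) ≤ (j:ℝ) := by exact_mod_cast hkj
      _ ≤ _ := hjle
  have hKL : (k:ℝ)*L ≤ (n:ℝ)/2 + L := by
    have h := mul_le_mul_of_nonneg_right hk_hi hLpos.le
    have hNL : ((n:ℝ)/(2*L))*L = (n:ℝ)/2 := by field_simp
    nlinarith
  have hNK2 : (n:ℝ) ≤ 2*(k:ℝ)*L := by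
    have h := mul_le_mul_of_nonneg_right hkge (by positivity : (0:ℝ) ≤ 2*L)
    have : ((n:ℝ)/(2*L))*(2*L) = (n:ℝ) := by field_simp
    nlinarith
  have hKN : (k:ℝ) ≤ (n:ℝ) := by
    have h1 : (n:ℝ)/(2*L) ≤ (n:ℝ)/2 := by
      rw [div_le_div_iff₀ (by positivity) (by norm_num)]; nlinarith
    linarith
  have hlog2_pos : (0:ℝ) < Real.log 2 := Real.log_pos one_lt_two
  have hlog2_lb : (0.6931471803:ℝ) < Real.log 2 := Real.log_two_gt_d9
  -- T = n/(2k)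
  set T := (n:ℝ)/(2*(k:ℝ)) with hT_def
  clear_value T
  have hT0 : (0:ℝ) < T := by rw [hT_def]; positivity
  have hTL : T ≤ L := by rw [hT_def, div_le_iff₀ (by positivity)]; nlinarith
  have hlogT_le : Real.logb 2 T ≤ 1.5*(L-1) := by
    have h1 : Real.logb 2 T ≤ Real.logb 2 L :=
      Real.logb_le_logb_of_le one_lt_two hT0 hTL
    have h2 : Real.log L ≤ L - 1 := Real.log_le_sub_one_of_pos hLpos
    have h4 : (0:ℝ) ≤ (L-1)*(1.5*Real.log 2 - 1) :=
      mul_nonneg (by linarith) (by linarith)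
    have h3 : Real.logb 2 L ≤ 1.5*(L-1) := by
      rw [Real.logb, div_le_iff₀ hlog2_pos]; nlinarith
    linarith
  constructor
  · -- LOWER BOUND
    by_cases hsmall : (n:ℝ) ≤ 16
    · -- small n : choose ≥ 2 suffices
      have hdiv : (n:ℝ)/(2*L) ≤ (n:ℝ)/2 := by
        rw [div_le_div_iff₀ (by positivity) (by norm_num)]; nlinarith
      have hkn1 : k ≤ n - 1 := by
        apply hkmin (n-1) (by omega)
        have hc : ((n-1:ℕ):ℝ) = (n:ℝ) - 1 := by
          push_cast [Nat.cast_sub (by omega : 1 ≤ n)]; ring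
        rw [hc]; linarith
      have hkm1 : k + 1 ≤ m := by omega
      have hC2 : 2 ≤ m.choose k := by
        have h1 : (k+1).choose k ≤ m.choose k := Nat.choose_le_choose k hkm1
        rw [Nat.choose_succ_self_right] at h1; omega
      have hC2' : (2:ℝ) ≤ (m.choose k : ℝ) := by exact_mod_cast hC2
      have h1 : (2:ℝ)^((1/16:ℝ)*(n:ℝ)) ≤ (2:ℝ)^(1:ℝ) :=
        Real.rpow_le_rpow_of_exponent_le one_le_two (by linarith)
      rw [Real.rpow_one] at h1
      linarith
    · push_neg at hsmall
      by_cases hk_eq : k = 1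
      · subst hk_eq
        rw [Nat.choose_one_right]
        have hn2L : (n:ℝ) ≤ 2*L := by
          have h := hkge
          rw [Nat.cast_one, div_le_one (by positivity)] at h
          linarith
        have h2L : (2:ℝ)^L = 2*(m:ℝ)/(n:ℝ) := by
          rw [hL_def]; exact Real.rpow_logb (by norm_num : (0:ℝ) < 2) (by norm_num) hq_pos
        have h1 : (2:ℝ)^((1/16:ℝ)*(n:ℝ)) ≤ (2:ℝ)^L :=
          Real.rpow_le_rpow_of_exponent_le one_le_two (by linarith)
        rw [h2L] at h1
        linarith
      · have hk2 : 2 ≤ k := by omega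
        have hNL2 : 2*L < (n:ℝ) := by
          by_contra hcon
          push_neg at hcon
          have h1 : (n:ℝ)/(2*L) ≤ ((1:ℕ):ℝ) := by
            rw [Nat.cast_one, div_le_one (by positivity)]; linarith
          have := hkmin 1 le_rfl h1
          omega
        have hkm : k ≤ m := by exact_mod_cast le_trans hKN hMN
        have hCl : ((m:ℝ)/(k:ℝ))^k ≤ (m.choose k : ℝ) := aux_div_pow_le_choose k m hkm
        have hT_lb : (n:ℝ)*L/((n:ℝ)+2*L) ≤ T := by
          rw [hT_def, div_le_div_iff₀ (by positivity) (by positivity)]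
          nlinarith
        have hlogT_lb : Real.logb 2 L - 3*L/(n:ℝ) ≤ Real.logb 2 T := by
          have h1 : Real.logb 2 ((n:ℝ)*L/((n:ℝ)+2*L)) ≤ Real.logb 2 T :=
            Real.logb_le_logb_of_le one_lt_two (by positivity) hT_lb
          have h2 : (n:ℝ)*L/((n:ℝ)+2*L) = L / (1 + 2*L/(n:ℝ)) := by
            field_simp
          have h3 : Real.logb 2 (L/(1+2*L/(n:ℝ)))
              = Real.logb 2 L - Real.logb 2 (1+2*L/(n:ℝ)) :=
            Real.logb_div (ne_of_gt hLpos) (by positivity)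
          have h4 : Real.log (1+2*L/(n:ℝ)) ≤ 2*L/(n:ℝ) := by
            have := Real.log_le_sub_one_of_pos (x := 1+2*L/(n:ℝ)) (by positivity)
            linarith
          have hLn_pos : (0:ℝ) < L/(n:ℝ) := by positivity
          have h5 : Real.logb 2 (1+2*L/(n:ℝ)) ≤ 3*L/(n:ℝ) := by
            rw [Real.logb, div_le_iff₀ hlog2_pos]
            have h30 : (0:ℝ) ≤ 3*Real.log 2 - 2 := by linarith
            have hp : (0:ℝ) ≤ L/(n:ℝ)*(3*Real.log 2 - 2) := mul_nonneg hLn_pos.le h30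
            have hiden : 3*L/(n:ℝ)*Real.log 2 - 2*L/(n:ℝ) = (L/(n:ℝ))*(3*Real.log 2 - 2) := by
              ring
            linarith [hp, h4, hiden]
          rw [h2, h3] at h1
          linarith
        have hdecomp : Real.logb 2 ((m:ℝ)/(k:ℝ)) = L + Real.logb 2 T := by
          have hprod : (m:ℝ)/(k:ℝ) = (2*(m:ℝ)/(n:ℝ)) * T := by
            rw [hT_def]; field_simp
          rw [hprod, Real.logb_mul (ne_of_gt hq_pos) (ne_of_gt hT0), hL_def]
        have hexp_lb : (n:ℝ)/2 - 3 ≤ (k:ℝ) * Real.logb 2 ((m:ℝ)/(k:ℝ)) := by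
          rw [hdecomp]
          have pKL : (n:ℝ)/2 ≤ (k:ℝ)*L := by nlinarith
          have pLogL : 0 ≤ Real.logb 2 L := Real.logb_nonneg one_lt_two hL1
          have pT : (k:ℝ) * (Real.logb 2 L - 3*L/(n:ℝ)) ≤ (k:ℝ) * Real.logb 2 T :=
            mul_le_mul_of_nonneg_left hlogT_lb hK0.le
          have hkLn : (k:ℝ)*L ≤ (n:ℝ) := by linarith
          have p3 : (k:ℝ) * (3*L/(n:ℝ)) ≤ 3 := by
            have heq : (k:ℝ)*(3*L/(n:ℝ)) = 3*((k:ℝ)*L)/(n:ℝ) := by ring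
            rw [heq, div_le_iff₀ hN0]; nlinarith
          have p4 : 0 ≤ (k:ℝ) * Real.logb 2 L := mul_nonneg hK0.le pLogL
          nlinarith
        have hx_pos : (0:ℝ) < (m:ℝ)/(k:ℝ) := by positivity
        have hrwL : (2:ℝ)^((k:ℝ)*Real.logb 2 ((m:ℝ)/(k:ℝ))) = ((m:ℝ)/(k:ℝ))^k := by
          rw [mul_comm, Real.rpow_mul (by norm_num : (0:ℝ) ≤ 2),
            Real.rpow_logb (by norm_num : (0:ℝ) < 2) (by norm_num) hx_pos, Real.rpow_natCast]
        calc (2:ℝ)^((1/16:ℝ)*(n:ℝ))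
            ≤ (2:ℝ)^((k:ℝ)*Real.logb 2 ((m:ℝ)/(k:ℝ))) :=
              Real.rpow_le_rpow_of_exponent_le one_le_two (by linarith)
          _ = ((m:ℝ)/(k:ℝ))^k := hrwL
          _ ≤ (m.choose k : ℝ) := hCl
  · -- UPPER BOUND
    have hfact_pos : (0:ℝ) < (k.factorial : ℝ) := by exact_mod_cast k.factorial_pos
    have hfact_lb : ((k:ℝ))^k / Real.exp 1 ^ k ≤ (k.factorial:ℝ) := by
      have h := Real.pow_div_factorial_le_exp (x := (k:ℝ)) hK0.le k
      have hek : Real.exp ((k:ℝ)) = Real.exp 1 ^ k := by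
        rw [← Real.exp_nat_mul]; norm_num
      rw [div_le_iff₀ hfact_pos] at h
      rw [div_le_iff₀ (by positivity)]
      rw [hek] at h
      nlinarith [pow_pos (Real.exp_pos 1) k, hfact_pos]
    have hx_pos : (0:ℝ) < Real.exp 1 * (m:ℝ) / (k:ℝ) := by positivity
    have hCup : (m.choose k : ℝ) ≤ (Real.exp 1 * (m:ℝ) / (k:ℝ))^k := by
      have h1 : (m.choose k : ℝ) ≤ ((m:ℝ))^k / (k.factorial:ℝ) := by
        have := Nat.choose_le_pow_div (α := ℝ) k m
        push_cast at this ⊢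
        convert this using 2
      have heq : (Real.exp 1 * (m:ℝ) / (k:ℝ))^k * (((k:ℝ))^k / Real.exp 1 ^ k) = ((m:ℝ))^k := by
        have hx2 : (Real.exp 1 * (m:ℝ) / (k:ℝ)) * ((k:ℝ)/Real.exp 1) = (m:ℝ) := by
          field_simp
        rw [← div_pow, ← mul_pow, hx2]
      have h2 : ((m:ℝ))^k / (k.factorial:ℝ) ≤ (Real.exp 1 * (m:ℝ) / (k:ℝ))^k := by
        rw [div_le_iff₀ hfact_pos]
        calc ((m:ℝ))^k = (Real.exp 1 * (m:ℝ) / (k:ℝ))^k * (((k:ℝ))^k / Real.exp 1 ^ k) := heq.symm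
          _ ≤ (Real.exp 1 * (m:ℝ) / (k:ℝ))^k * (k.factorial:ℝ) :=
              mul_le_mul_of_nonneg_left hfact_lb (by positivity)
      linarith
    have hsplit : Real.logb 2 (Real.exp 1 * (m:ℝ) / (k:ℝ))
        = Real.logb 2 (Real.exp 1) + L + Real.logb 2 T := by
      have hq' : (2*(m:ℝ)/(n:ℝ)) * ((n:ℝ)/(2*(k:ℝ))) = (m:ℝ)/(k:ℝ) := by
        field_simp
      have hprod : Real.exp 1 * (m:ℝ) / (k:ℝ) = Real.exp 1 * ((2*(m:ℝ)/(n:ℝ)) * T) := by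
        rw [hT_def, hq', mul_div_assoc]
      rw [hprod, Real.logb_mul (ne_of_gt (Real.exp_pos 1)) (ne_of_gt (mul_pos hq_pos hT0)),
        Real.logb_mul (ne_of_gt hq_pos) (ne_of_gt hT0), hL_def]
      ring
    have hlogE : Real.logb 2 (Real.exp 1) ≤ 1.5 := by
      rw [Real.logb, Real.log_exp, div_le_iff₀ hlog2_pos]
      nlinarith
    have hmain_up : (k:ℝ) * Real.logb 2 (Real.exp 1 * (m:ℝ) / (k:ℝ)) ≤ 6 * (n:ℝ) := by
      rw [hsplit]
      have p1 : (k:ℝ) * Real.logb 2 (Real.exp 1) ≤ 1.5 * (k:ℝ) :=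
        by nlinarith [mul_le_mul_of_nonneg_left hlogE hK0.le]
      have p2 : (k:ℝ) * Real.logb 2 T ≤ (k:ℝ)*(1.5*(L-1)) :=
        mul_le_mul_of_nonneg_left hlogT_le hK0.le
      nlinarith
    have hrw : (2:ℝ)^((k:ℝ)*Real.logb 2 (Real.exp 1 * (m:ℝ) / (k:ℝ)))
        = (Real.exp 1 * (m:ℝ) / (k:ℝ))^k := by
      rw [mul_comm, Real.rpow_mul (by norm_num : (0:ℝ) ≤ 2),
        Real.rpow_logb (by norm_num : (0:ℝ) < 2) (by norm_num) hx_pos, Real.rpow_natCast]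
    calc (m.choose k : ℝ) ≤ (Real.exp 1 * (m:ℝ) / (k:ℝ))^k := hCup
      _ = (2:ℝ)^((k:ℝ)*Real.logb 2 (Real.exp 1 * (m:ℝ) / (k:ℝ))) := hrw.symm
      _ ≤ (2:ℝ)^((6:ℝ)*(n:ℝ)) := Real.rpow_le_rpow_of_exponent_le one_le_two hmain_up
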